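/- Let q ≥ 2 and m ≥ 1 be integers and let s be a real number with 1 < s < q. Then there exists a set C ⊆ {0,...,q−1}^m whose distinct elements have pairwise Hamming distance at least m(1 − 1/s) and with ln|C| ≥ m·(ln(q/s) − 1)/s. In particular, if ln(q/s) > 1 and |C| = N, then m ≤ s·ln N / (ln(q/s) − 1). -/

import Mathlib

open Finset
set_option maxHeartbeats 1000000

lemma gv_filter_card (q m : ℕ) (x : Fin m → Fin q) (S : Finset (Fin m)) :
    (Finset.univ.filter (fun y : Fin m → Fin q => ∀ i ∈ S, y i = x i)).card
      = q ^ (m - S.card) := by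
  classical
  have he : Finset.univ.filter (fun y : Fin m → Fin q => ∀ i ∈ S, y i = x i)
      = Fintype.piFinset (fun i => if i ∈ S then {x i} else Finset.univ) := by
    ext y
    simp only [mem_filter, mem_univ, true_and, Fintype.mem_piFinset]
    constructor
    · intro h i
      by_cases hi : i ∈ S <;> simp [hi, h i]
    · intro h i hi
      simpa [hi] using h i
  rw [he, Fintype.card_piFinset]
  have : ∀ i, #(if i ∈ S then ({x i} : Finset (Fin q)) else Finset.univ)
      = if i ∈ S then 1 else q := by
    intro i; by_cases hi : i ∈ S <;> simp [hi]
  simp only [this]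
  rw [Finset.prod_ite]
  simp only [Finset.prod_const_one, Finset.prod_const, one_mul]
  congr 1
  · rw [show Finset.univ.filter (fun i => ¬ i ∈ S) = Sᶜ by ext i; simp]
    simp [Finset.card_compl]
open Finset
set_option maxHeartbeats 1000000

lemma gv_count (q m t : ℕ) (C : Finset (Fin m → Fin q))
    (hcov : ∀ y : Fin m → Fin q, ∃ x ∈ C, ∃ S : Finset (Fin m), S.card = t ∧ ∀ i ∈ S, y i = x i) :
    q ^ m ≤ C.card * m.choose t * q ^ (m - t) := by
  classical
  have hsub : (Finset.univ : Finset (Fin m → Fin q)) ⊆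
      (C ×ˢ (Finset.univ : Finset (Fin m)).powersetCard t).biUnion
        (fun p => Finset.univ.filter (fun y => ∀ i ∈ p.2, y i = p.1 i)) := by
    intro y _
    obtain ⟨x, hx, S, hS, hagree⟩ := hcov y
    refine mem_biUnion.mpr ⟨(x, S), mem_product.mpr ⟨hx, mem_powersetCard.mpr ⟨subset_univ _, hS⟩⟩, ?_⟩
    simpa using hagree
  have h1 : q ^ m = (Finset.univ : Finset (Fin m → Fin q)).card := by
    rw [Finset.card_univ, Fintype.card_fun, Fintype.card_fin, Fintype.card_fin]
  have h2 := Finset.card_le_card hsub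
  have h3 : ((C ×ˢ (Finset.univ : Finset (Fin m)).powersetCard t).biUnion
        (fun p => Finset.univ.filter (fun y : Fin m → Fin q => ∀ i ∈ p.2, y i = p.1 i))).card ≤
      ∑ p ∈ C ×ˢ (Finset.univ : Finset (Fin m)).powersetCard t,
          (Finset.univ.filter (fun y : Fin m → Fin q => ∀ i ∈ p.2, y i = p.1 i)).card :=
    Finset.card_biUnion_le
  have h4 : ∑ p ∈ C ×ˢ (Finset.univ : Finset (Fin m)).powersetCard t,
          (Finset.univ.filter (fun y : Fin m → Fin q => ∀ i ∈ p.2, y i = p.1 i)).card ≤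
      ∑ _p ∈ C ×ˢ (Finset.univ : Finset (Fin m)).powersetCard t, q ^ (m - t) := by
    refine Finset.sum_le_sum fun p hp => ?_
    have hc : p.2.card = t := (mem_powersetCard.mp (mem_product.mp hp).2).2
    rw [gv_filter_card, hc]
  have h5 : ∑ _p ∈ C ×ˢ (Finset.univ : Finset (Fin m)).powersetCard t, q ^ (m - t)
      = C.card * m.choose t * q ^ (m - t) := by
    rw [Finset.sum_const, Finset.card_product, card_powersetCard, Finset.card_univ,
      Fintype.card_fin]
    simp [mul_assoc]
  rw [h1]; exact h2.trans (h3.trans (h4.trans_eq h5))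


lemma gv_exists_maximal (q m : ℕ) (hq : 1 ≤ q) (d : ℝ) :
    ∃ C : Finset (Fin m → Fin q),
      (∀ x ∈ C, ∀ y ∈ C, x ≠ y → d ≤ (hammingDist x y : ℝ)) ∧ C.Nonempty ∧
      ∀ y : Fin m → Fin q, ∃ x ∈ C, x = y ∨ (hammingDist x y : ℝ) < d := by
  classical
  set P : Finset (Fin m → Fin q) → Prop :=
    fun C => ∀ x ∈ C, ∀ y ∈ C, x ≠ y → d ≤ (hammingDist x y : ℝ) with hPdef
  set y0 : Fin m → Fin q := fun _ => ⟨0, hq⟩ with hy0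
  have hsing : P {y0} := by
    intro x hx y hy hxy
    simp only [mem_singleton] at hx hy
    exact absurd (hx.trans hy.symm) hxy
  set 𝒞 := (Finset.univ : Finset (Finset (Fin m → Fin q))).filter P with h𝒞
  have hne : 𝒞.Nonempty := ⟨{y0}, mem_filter.mpr ⟨mem_univ _, hsing⟩⟩
  obtain ⟨C, hC, hmax⟩ := Finset.exists_max_image 𝒞 Finset.card hne
  have hCP : P C := (mem_filter.mp hC).2
  refine ⟨C, hCP, ?_, ?_⟩
  · have h1 : ({y0} : Finset (Fin m → Fin q)).card ≤ C.card :=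
      hmax _ (mem_filter.mpr ⟨mem_univ _, hsing⟩)
    simp only [card_singleton] at h1
    exact Finset.card_pos.mp h1
  · intro y
    by_cases hy : y ∈ C
    · exact ⟨y, hy, Or.inl rfl⟩
    by_contra hcon
    push_neg at hcon
    have hins : P (insert y C) := by
      intro a ha b hb hab
      rcases mem_insert.mp ha with ha' | ha' <;> rcases mem_insert.mp hb with hb' | hb'
      · exact absurd (ha'.trans hb'.symm) hab
      · obtain ⟨hne', hd⟩ := hcon b hb'
        subst ha'
        rwa [hammingDist_comm] at hd
      · subst hb'
        exact (hcon a ha').2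
      · exact hCP a ha' b hb' hab
    have hmem : insert y C ∈ 𝒞 := mem_filter.mpr ⟨mem_univ _, hins⟩
    have := hmax _ hmem
    rw [Finset.card_insert_of_notMem hy] at this
    omega

lemma gv_analysis (q m t N : ℕ) (s : ℝ) (hq : 2 ≤ q) (ht1 : 1 ≤ t) (htm : t ≤ m)
    (hN : 1 ≤ N) (hmain : (q:ℝ) ^ t ≤ (N : ℝ) * (m.choose t : ℝ))
    (hs0 : 0 < s) (hts : (m:ℝ)/s ≤ t) :
    (t : ℝ) * (Real.log ((q:ℝ)/s) - 1) ≤ Real.log (N : ℝ) := by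
  have hqpos : (0:ℝ) < q := by positivity
  have htpos : (0:ℝ) < t := by exact_mod_cast ht1
  have hmpos : (0:ℝ) < m := lt_of_lt_of_le htpos (by exact_mod_cast htm)
  have hNpos : (0:ℝ) < N := by exact_mod_cast hN
  have hCpos : (0:ℝ) < (m.choose t : ℝ) := by
    exact_mod_cast Nat.choose_pos htm
  have hfac : (0:ℝ) < (t.factorial : ℝ) := by exact_mod_cast t.factorial_pos
  -- Step A
  have hA : (t:ℝ) * Real.log q ≤ Real.log N + Real.log (m.choose t) := by
    have := Real.log_le_log (by positivity) hmain
    rwa [Real.log_pow, Real.log_mul (ne_of_gt hNpos) (ne_of_gt hCpos)] at this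
  -- Step B : choose ≤ m^t * exp t / t^t
  have hfacB : (t:ℝ)^t ≤ Real.exp t * t.factorial := by
    have h := Real.pow_div_factorial_le_exp (x := (t:ℝ)) (le_of_lt htpos) t
    calc (t:ℝ)^t = (t:ℝ)^t / t.factorial * t.factorial := by field_simp
      _ ≤ Real.exp t * t.factorial := by
          exact mul_le_mul_of_nonneg_right h (le_of_lt hfac)
  have hB : (m.choose t : ℝ) ≤ (m:ℝ)^t * Real.exp t / (t:ℝ)^t := by
    have h1 : (m.choose t : ℝ) ≤ (m:ℝ)^t / t.factorial := by
      exact_mod_cast Nat.choose_le_pow_div t m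
    refine h1.trans ?_
    rw [div_le_div_iff₀ hfac (by positivity)]
    have hmt : (0:ℝ) ≤ (m:ℝ)^t := by positivity
    nlinarith [mul_le_mul_of_nonneg_left hfacB hmt]
  -- Step C
  have hC : Real.log (m.choose t) ≤ (t:ℝ) * Real.log m + t - (t:ℝ) * Real.log t := by
    have := Real.log_le_log hCpos hB
    rwa [Real.log_div (by positivity) (by positivity), Real.log_mul (by positivity) (by positivity),
      Real.log_pow, Real.log_pow, Real.log_exp] at this
  -- Step D
  have hD : Real.log m ≤ Real.log s + Real.log t := by
    rw [← Real.log_mul (ne_of_gt hs0) (ne_of_gt htpos)]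
    refine Real.log_le_log hmpos ?_
    rw [div_le_iff₀ hs0] at hts
    linarith [hts, mul_comm (t:ℝ) s]
  rw [Real.log_div (ne_of_gt hqpos) (ne_of_gt hs0)]
  have htnn : (0:ℝ) ≤ t := le_of_lt htpos
  nlinarith [mul_le_mul_of_nonneg_left hD htnn]


/-- for integers `q ≥ 2`, `m ≥ 1` and a real `1 < s < q`, there is a
`q`-ary code of length `m` with pairwise distance at least `m(1 − 1/s)` and
`ln|C| ≥ m(ln(q/s) − 1)/s`; in particular if `ln(q/s) > 1` and `|C| = N` then
`m ≤ s·ln N/(ln(q/s) − 1)`. -/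
theorem gv_code_rate (q m : ℕ) (s : ℝ) (hq : 2 ≤ q) (hm : 1 ≤ m)
    (hs1 : 1 < s) (hsq : s < (q : ℝ)) :
    ∃ C : Finset (Fin m → Fin q),
      (∀ x ∈ C, ∀ y ∈ C, x ≠ y → (m : ℝ) * (1 - 1 / s) ≤ (hammingDist x y : ℝ)) ∧
      (m : ℝ) * (Real.log ((q : ℝ) / s) - 1) / s ≤ Real.log (C.card : ℝ) ∧
      (1 < Real.log ((q : ℝ) / s) → ∀ N : ℕ, C.card = N →
        (m : ℝ) ≤ s * Real.log (N : ℝ) / (Real.log ((q : ℝ) / s) - 1)) := by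
  classical
  have hs0 : (0:ℝ) < s := by linarith
  have hmpos : (0:ℝ) < m := by exact_mod_cast hm
  set t : ℕ := ⌈(m:ℝ)/s⌉₊ with htdef
  have hts : (m:ℝ)/s ≤ t := Nat.le_ceil _
  have ht1 : 1 ≤ t := Nat.one_le_ceil_iff.mpr (by positivity)
  have htm : t ≤ m := Nat.ceil_le.mpr (by
    calc (m:ℝ)/s ≤ (m:ℝ)/1 := by
          apply div_le_div_of_nonneg_left (le_of_lt hmpos) one_pos hs1.le
      _ = (m:ℝ) := by rw [div_one])
  obtain ⟨C, hCdist, hCne, hCcov⟩ :=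
    gv_exists_maximal q m (by omega) ((m:ℝ) * (1 - 1/s))
  have hN1 : 1 ≤ C.card := Finset.card_pos.mpr hCne
  -- covering in the counting form
  have hcov : ∀ y : Fin m → Fin q, ∃ x ∈ C, ∃ S : Finset (Fin m),
      S.card = t ∧ ∀ i ∈ S, y i = x i := by
    intro y
    obtain ⟨x, hx, hcase⟩ := hCcov y
    rcases hcase with rfl | hlt
    · obtain ⟨S, _, hScard⟩ :=
        Finset.exists_subset_card_eq (show t ≤ (Finset.univ : Finset (Fin m)).card by
          simpa using htm)
      exact ⟨x, hx, S, hScard, fun i _ => rfl⟩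
    · set A : Finset (Fin m) := Finset.univ.filter (fun i => x i = y i) with hA
      have hsum : A.card + hammingDist x y = m := by
        have h1 := Finset.card_filter_add_card_filter_not
          (s := (Finset.univ : Finset (Fin m))) (p := fun i => x i = y i)
        have h2 : hammingDist x y = (Finset.univ.filter (fun i => ¬ x i = y i)).card := rfl
        simpa [hA, h2] using h1
      have hdm : hammingDist x y ≤ m := by omega
      have htA : t ≤ A.card := by
        apply Nat.ceil_le.mpr
        have hcast : (A.card : ℝ) = (m:ℝ) - (hammingDist x y : ℝ) := by
          have := hsum
          push_cast [← this]
          ring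
        rw [hcast]
        have : (m:ℝ) * (1 - 1/s) = (m:ℝ) - (m:ℝ)/s := by ring
        rw [this] at hlt
        linarith
      obtain ⟨S, hSA, hScard⟩ := Finset.exists_subset_card_eq htA
      refine ⟨x, hx, S, hScard, fun i hi => ?_⟩
      have := hSA hi
      rw [hA, Finset.mem_filter] at this
      exact this.2.symm
  have hcount := gv_count q m t C hcov
  have hqt : q ^ t ≤ C.card * m.choose t := by
    have hpow : q ^ m = q ^ t * q ^ (m - t) := by
      rw [← pow_add]
      congr 1
      omega
    rw [hpow] at hcount
    exact Nat.le_of_mul_le_mul_right hcount (Nat.pow_pos (by omega))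
  have hmainR : (q:ℝ) ^ t ≤ (C.card : ℝ) * (m.choose t : ℝ) := by exact_mod_cast hqt
  have hanal := gv_analysis q m t C.card s hq ht1 htm hN1 hmainR hs0 hts
  have hmain2 : (m : ℝ) * (Real.log ((q : ℝ) / s) - 1) / s ≤ Real.log (C.card : ℝ) := by
    rcases le_or_gt (Real.log ((q:ℝ)/s)) 1 with hL | hL
    · have h1 : (m : ℝ) * (Real.log ((q : ℝ) / s) - 1) / s ≤ 0 := by
        apply div_nonpos_of_nonpos_of_nonneg _ hs0.le
        apply mul_nonpos_of_nonneg_of_nonpos (le_of_lt hmpos)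
        linarith
      have h2 : (0:ℝ) ≤ Real.log (C.card : ℝ) :=
        Real.log_nonneg (by exact_mod_cast hN1)
      linarith
    · have h1 : (m : ℝ) * (Real.log ((q : ℝ) / s) - 1) / s
          ≤ (t : ℝ) * (Real.log ((q : ℝ) / s) - 1) := by
        have h2 := mul_le_mul_of_nonneg_right hts
          (show (0:ℝ) ≤ Real.log ((q:ℝ)/s) - 1 by linarith)
        calc (m : ℝ) * (Real.log ((q : ℝ) / s) - 1) / s
            = (m:ℝ)/s * (Real.log ((q : ℝ) / s) - 1) := by ring
          _ ≤ (t:ℝ) * (Real.log ((q : ℝ) / s) - 1) := h2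
      linarith
  refine ⟨C, hCdist, hmain2, ?_⟩
  intro hL N hNC
  rw [hNC] at hmain2
  rw [le_div_iff₀ (by linarith : (0:ℝ) < Real.log ((q:ℝ)/s) - 1)]
  rw [div_le_iff₀ hs0] at hmain2
  nlinarith [hmain2]
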